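/- arXiv:2103.10053 — 2 statements merged into one kernel-verified Lean document; each statement's English description precedes it below -/
import Mathlib

section
/- Let ν > 0 and β₂₁ = r(λ₀)·Γ(-iν)·ν/(√(2π)·e^{iπ/4}·e^{-πν/2}) where ν = -(1/(2π))log(1-|r(λ₀)|²). Then |β₂₁|² = ν. (This uses the identity |Γ(iν)|² = π/(ν·sinh(πν)).) -/
open Complex

lemma abs_gamma_neg_I (ν : ℝ) (hν : 0 < ν) :
    ‖Complex.Gamma (-Complex.I * ν)‖ ^ 2
      = Real.pi / (ν * Real.sinh (Real.pi * ν)) := by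
  have hz : (-Complex.I * ν : ℂ) ≠ 0 := by
    simp [Complex.ext_iff, hν.ne']
  have h1 : Complex.Gamma (-Complex.I * ν + 1) = (-Complex.I * ν) * Complex.Gamma (-Complex.I * ν) :=
    Complex.Gamma_add_one _ hz
  have hconj : Complex.Gamma (Complex.I * ν) = starRingEnd ℂ (Complex.Gamma (-Complex.I * ν)) := by
    rw [← Complex.Gamma_conj]
    congr 1
    simp [Complex.ext_iff]
  have href := Complex.Gamma_mul_Gamma_one_sub (Complex.I * ν)
  have h2 : (1 : ℂ) - Complex.I * ν = -Complex.I * ν + 1 := by ring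
  rw [h2, h1, hconj] at href
  have hsin : Complex.sin (Real.pi * (Complex.I * ν)) = Real.sinh (Real.pi * ν) * Complex.I := by
    have : (Real.pi : ℂ) * (Complex.I * ν) = ((Real.pi * ν : ℝ) : ℂ) * Complex.I := by
      push_cast; ring
    rw [this, Complex.sin_mul_I, Complex.ofReal_sinh]
  rw [hsin] at href
  -- href : conj Γ * (-I ν * Γ) = π / (sinh(πν) I)
  have hsinh : Real.sinh (Real.pi * ν) ≠ 0 := by positivity
  have hne : ((Real.sinh (Real.pi * ν) : ℂ) * Complex.I) ≠ 0 := by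
    exact mul_ne_zero (Complex.ofReal_ne_zero.2 hsinh) Complex.I_ne_zero
  rw [eq_div_iff hne] at href
  set G := Complex.Gamma (-Complex.I * ν) with hG
  have h3 : G * starRingEnd ℂ G * ((ν : ℂ) * (Real.sinh (Real.pi * ν) : ℂ)) = (Real.pi : ℂ) := by
    linear_combination href + (G * starRingEnd ℂ G * (ν : ℂ) * (Real.sinh (Real.pi * ν) : ℂ)) * Complex.I_sq
  have key : ((‖G‖ ^ 2 : ℝ) : ℂ) = ((Real.pi / (ν * Real.sinh (Real.pi * ν)) : ℝ) : ℂ) := by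
    rw [Complex.sq_norm, ← Complex.mul_conj]
    rw [Complex.ofReal_div, Complex.ofReal_mul, eq_div_iff (mul_ne_zero (Complex.ofReal_ne_zero.2 hν.ne') (Complex.ofReal_ne_zero.2 hsinh) : ((ν : ℂ) * (Real.sinh (Real.pi * ν) : ℂ)) ≠ 0)]
    linear_combination h3
  exact_mod_cast key

theorem stmt15 (r0 : ℂ) (hr0 : 0 < ‖r0‖) (hr1 : ‖r0‖ < 1)
    (ν : ℝ) (hν : ν = -(1 / (2 * Real.pi)) * Real.log (1 - ‖r0‖ ^ 2))
    (β : ℂ)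
    (hβ : β = r0 * Complex.Gamma (-Complex.I * ν) * ν /
      ((Real.sqrt (2 * Real.pi) : ℂ) * Complex.exp (Complex.I * Real.pi / 4) *
        Complex.exp (-(Real.pi : ℂ) * ν / 2))) :
    ‖β‖ ^ 2 = ν := by
  have hπ : 0 < Real.pi := Real.pi_pos
  set a := ‖r0‖ with ha
  have h1a : 0 < 1 - a ^ 2 := by nlinarith
  have h1b : 1 - a ^ 2 < 1 := by nlinarith
  have hlog : Real.log (1 - a ^ 2) < 0 := Real.log_neg h1a h1b
  have hνpos : 0 < ν := by
    rw [hν]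
    have : 0 < 1 / (2 * Real.pi) := by positivity
    nlinarith
  have hloge : Real.log (1 - a ^ 2) = -(2 * Real.pi * ν) := by
    rw [hν]; field_simp
  have ha2 : a ^ 2 = 1 - Real.exp (-(2 * Real.pi * ν)) := by
    have := Real.exp_log h1a
    rw [hloge] at this
    linarith
  -- compute abs β
  have habs : ‖β‖ =
      a * ‖Complex.Gamma (-Complex.I * ν)‖ * ν /
        (Real.sqrt (2 * Real.pi) * Real.exp (-(Real.pi * ν) / 2)) := by
    rw [hβ]
    rw [norm_div, norm_mul, norm_mul, norm_mul, norm_mul]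
    rw [Complex.norm_exp, Complex.norm_exp, Complex.norm_real, Complex.norm_real, Real.norm_eq_abs, Real.norm_eq_abs]
    have h1 : (Complex.I * (Real.pi : ℂ) / 4).re = 0 := by simp
    have h2 : (-(Real.pi : ℂ) * ν / 2).re = -(Real.pi * ν) / 2 := by
      simp [Complex.div_re]
    rw [h1, h2, Real.exp_zero]
    rw [_root_.abs_of_nonneg (Real.sqrt_nonneg _), _root_.abs_of_nonneg hνpos.le]
    ring
  rw [habs, div_pow, mul_pow, mul_pow, mul_pow]
  rw [abs_gamma_neg_I ν hνpos, ha2]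
  rw [Real.sq_sqrt (by positivity : (0:ℝ) ≤ 2 * Real.pi)]
  have hE : Real.exp (-(Real.pi * ν) / 2) ^ 2 = Real.exp (-(Real.pi * ν)) := by
    rw [sq, ← Real.exp_add]; ring_nf
  rw [hE, Real.sinh_eq]
  set E := Real.exp (Real.pi * ν) with hEdef
  have hEpos : (0:ℝ) < E := Real.exp_pos _
  have hE1 : 1 < E := by
    have := Real.add_one_le_exp (Real.pi * ν)
    rw [hEdef]
    nlinarith
  have hexp1 : Real.exp (-(Real.pi * ν)) = E⁻¹ := by
    rw [Real.exp_neg]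
  have hexp2 : Real.exp (-(2 * Real.pi * ν)) = E⁻¹ ^ 2 := by
    rw [← hexp1, ← Real.exp_nat_mul]
    norm_num
    ring_nf
  rw [hexp1, hexp2]
  have hnum : E ^ 2 - 1 ≠ 0 := by nlinarith
  have hsinh : E - E⁻¹ ≠ 0 := by
    rw [sub_ne_zero]
    intro h
    nlinarith [mul_inv_cancel₀ hEpos.ne']
  have hiE : E⁻¹ = 1 / E := by rw [inv_eq_one_div]
  rw [hiE]
  field_simp
end

section
/- Suppose a: closed upper half-plane → ℂ is analytic in the open upper half-plane, continuous up to the boundary, a(λ) → 1 as |λ| → ∞, and a has finitely many zeros λ₁,…,λ_N, all simple and in the open upper half-plane, and |a(λ)| = 1 for real λ. Then a(λ) = ∏_{n=1}^N (λ - λ_n)/(λ - conj(λ_n)) (the trace formula in the reflectionless case). -/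
open Complex Filter Set

theorem peel17 {α : Type*} [DecidableEq α] (lam : α → ℂ) (hinj : Function.Injective lam)
    (him : ∀ n, 0 < (lam n).im) :
    ∀ (s : Finset α) (f : ℂ → ℂ), DifferentiableOn ℂ f {z : ℂ | 0 < z.im} →
      ContinuousOn f {z : ℂ | 0 ≤ z.im} → (∀ n ∈ s, f (lam n) = 0) →
      ∃ g : ℂ → ℂ, DifferentiableOn ℂ g {z : ℂ | 0 < z.im} ∧
        ContinuousOn g {z : ℂ | 0 ≤ z.im} ∧
        ∀ z : ℂ, f z = g z * ∏ n ∈ s, (z - lam n) := by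
  intro s
  induction s using Finset.induction_on with
  | empty => intro f hd hc _; exact ⟨f, hd, hc, fun z => by simp⟩
  | @insert n s hns ih =>

    intro f hd hc hzero
    have hUopen : IsOpen {z : ℂ | 0 < z.im} := isOpen_lt continuous_const Complex.continuous_im
    have hmem : (lam n) ∈ {z : ℂ | 0 < z.im} := him n
    have hnhds : {z : ℂ | 0 < z.im} ∈ nhds (lam n) := hUopen.mem_nhds hmem
    set f₁ : ℂ → ℂ := dslope f (lam n) with hf₁
    have hd₁ : DifferentiableOn ℂ f₁ {z : ℂ | 0 < z.im} :=
      (differentiableOn_dslope hnhds).mpr hd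
    have hc₁ : ContinuousOn f₁ {z : ℂ | 0 ≤ z.im} := by
      intro z hz
      rcases eq_or_ne z (lam n) with rfl | hne
      · exact (((hd₁ _ hmem).differentiableAt hnhds).continuousAt).continuousWithinAt
      · exact (continuousWithinAt_dslope_of_ne hne).mpr (hc z hz)
    have hzero₁ : ∀ m ∈ s, f₁ (lam m) = 0 := by
      intro m hm
      have hne : lam m ≠ lam n := fun h => hns (hinj h ▸ hm)
      rw [hf₁, dslope_of_ne _ hne, slope_def_field, hzero m (Finset.mem_insert_of_mem hm),
        hzero n (Finset.mem_insert_self n s)]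
      simp
    obtain ⟨g, hgd, hgc, hfg⟩ := ih f₁ hd₁ hc₁ hzero₁
    refine ⟨g, hgd, hgc, fun z => ?_⟩
    have key : (z - lam n) • f₁ z = f z - f (lam n) := sub_smul_dslope f (lam n) z
    rw [smul_eq_mul, hzero n (Finset.mem_insert_self n s), sub_zero] at key
    rw [← key, hfg z, Finset.prod_insert hns]
    ring

theorem bound17 (h : ℂ → ℂ) (hc : ContinuousOn h {z : ℂ | 0 ≤ z.im})
    (hlim : Tendsto h (Filter.comap (fun z : ℂ => ‖z‖) Filter.atTop ⊓
      Filter.principal {z : ℂ | 0 ≤ z.im}) (nhds 1)) :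
    ∃ C : ℝ, ∀ z : ℂ, 0 ≤ z.im → ‖h z‖ ≤ C := by
  have h2 : ∀ᶠ z in (Filter.comap (fun z : ℂ => ‖z‖) Filter.atTop ⊓
      Filter.principal {z : ℂ | 0 ≤ z.im}), ‖h z‖ ≤ 2 := by
    filter_upwards [hlim.eventually (Metric.closedBall_mem_nhds (1:ℂ) one_pos)] with z hz
    have : dist (h z) 1 ≤ 1 := hz
    calc ‖h z‖ ≤ ‖h z - 1‖ + ‖(1:ℂ)‖ := by simpa using norm_add_le (h z - 1) 1
    _ ≤ 2 := by rw [← dist_eq_norm] at *; simp at *; linarith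
  rw [eventually_inf_principal, eventually_comap] at h2
  obtain ⟨R, hR⟩ := h2.exists_forall_of_atTop
  have hKc : IsCompact (Metric.closedBall (0:ℂ) R ∩ {z : ℂ | 0 ≤ z.im}) :=
    (isCompact_closedBall _ _).inter_right (isClosed_le continuous_const Complex.continuous_im)
  obtain ⟨C, hC⟩ := hKc.exists_bound_of_continuousOn (hc.mono fun z hz => hz.2)
  refine ⟨max C 2, fun z hz => ?_⟩
  rcases le_or_gt ‖z‖ R with hle | hgt
  · exact le_max_of_le_left (hC z ⟨by simpa [Metric.mem_closedBall, Complex.dist_eq] using hle, hz⟩)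
  · exact le_max_of_le_right (hR ‖z‖ hgt.le z rfl hz)

theorem pl17 (h : ℂ → ℂ) (hd : DifferentiableOn ℂ h {z : ℂ | 0 < z.im})
    (hc : ContinuousOn h {z : ℂ | 0 ≤ z.im})
    (hb : ∃ C : ℝ, ∀ z : ℂ, 0 ≤ z.im → ‖h z‖ ≤ C)
    (hone : ∀ x : ℝ, ‖h x‖ ≤ 1) :
    ∀ z : ℂ, 0 ≤ z.im → ‖h z‖ ≤ 1 := by
  obtain ⟨C, hC⟩ := hb
  set F : ℂ → ℂ := fun z => h (z * I) with hF
  have him : ∀ z : ℂ, (z * I).im = z.re := fun z => by simp [Complex.mul_im]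
  have hd' : DiffContOnCl ℂ F {z : ℂ | 0 < z.re} := by
    constructor
    · exact hd.comp ((differentiable_id.mul_const I).differentiableOn)
        (fun z hz => by simpa [him] using hz)
    · rw [closure_setOf_lt_re]
      exact hc.comp ((continuous_id.mul continuous_const).continuousOn)
        (fun z hz => by simpa [him] using hz)
  have key : ∀ z : ℂ, 0 ≤ z.re → ‖F z‖ ≤ 1 := by
    intro z hz
    refine PhragmenLindelof.right_half_plane_of_bounded_on_real hd' ?_ ?_ ?_ hz
    · refine ⟨1, one_lt_two, 0, Asymptotics.IsBigO.of_bound C ?_⟩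
      refine eventually_inf_principal.2 (Eventually.of_forall fun w hw => ?_)
      have : 0 ≤ (w * I).im := by rw [him]; exact le_of_lt hw
      simpa using hC _ this
    · refine ⟨C, ?_⟩
      rw [Filter.eventually_map]
      filter_upwards [eventually_ge_atTop (0:ℝ)] with x hx
      exact hC _ (by simpa [him] using hx)
    · intro x
      have : (x : ℂ) * I * I = ((-x : ℝ) : ℂ) := by push_cast; rw [mul_assoc, I_mul_I]; ring
      simpa [hF, this] using hone (-x)
  intro z hz
  have h1 : (-(z * I)) * I = z := by rw [neg_mul, mul_assoc, I_mul_I]; ring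
  have h2 : 0 ≤ (-(z * I)).re := by simp [Complex.mul_re]; exact hz
  simpa [hF, h1] using key (-(z * I)) h2

theorem ratio_tendsto17 (c : ℂ) :
    Tendsto (fun z : ℂ => (z - starRingEnd ℂ c) / (z - c))
      (Filter.comap (fun z : ℂ => ‖z‖) Filter.atTop) (nhds 1) := by
  have habs : Tendsto (fun z : ℂ => ‖z‖) (Filter.comap (fun z : ℂ => ‖z‖) Filter.atTop) atTop :=
    tendsto_comap
  have hnorm : Tendsto (fun z : ℂ => ‖z - c‖)
      (Filter.comap (fun z : ℂ => ‖z‖) Filter.atTop) atTop := by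
    refine tendsto_atTop_mono (fun z => ?_) (tendsto_atTop_add_const_right _ (-(‖c‖)) habs)
    simpa [Complex.dist_eq, sub_eq_add_neg] using
      (norm_sub_norm_le z c : ‖z‖ - ‖c‖ ≤ ‖z - c‖)
  have hinv : Tendsto (fun z : ℂ => (z - c)⁻¹) (Filter.comap (fun z : ℂ => ‖z‖) Filter.atTop) (nhds 0) := by
    rw [tendsto_zero_iff_norm_tendsto_zero]
    simpa [norm_inv, Function.comp_def] using tendsto_inv_atTop_zero.comp hnorm
  have h1 : Tendsto (fun z : ℂ => 1 + (c - starRingEnd ℂ c) * (z - c)⁻¹)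
      (Filter.comap (fun z : ℂ => ‖z‖) Filter.atTop) (nhds 1) := by
    simpa using tendsto_const_nhds.add (tendsto_const_nhds.mul hinv)
  refine h1.congr' ?_
  have : ∀ᶠ z : ℂ in Filter.comap (fun z : ℂ => ‖z‖) Filter.atTop, ‖c‖ < ‖z‖ :=
    habs.eventually_gt_atTop _
  filter_upwards [this] with z hz
  have hne : z - c ≠ 0 := by
    intro h
    rw [sub_eq_zero] at h
    subst h
    exact lt_irrefl _ hz
  field_simp
  ring

theorem stmt17 (a : ℂ → ℂ) (N : ℕ) (lam : Fin N → ℂ)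
    (hinj : Function.Injective lam)
    (him : ∀ n, 0 < (lam n).im)
    (hdiff : DifferentiableOn ℂ a {z : ℂ | 0 < z.im})
    (hcont : ContinuousOn a {z : ℂ | 0 ≤ z.im})
    (hlim : Tendsto a (Filter.comap (fun z : ℂ => ‖z‖) Filter.atTop ⊓
      Filter.principal {z : ℂ | 0 ≤ z.im}) (nhds 1))
    (hzeros : ∀ z : ℂ, 0 < z.im → (a z = 0 ↔ ∃ n, z = lam n))
    (hsimple : ∀ n, deriv a (lam n) ≠ 0)
    (hmod : ∀ x : ℝ, ‖a x‖ = 1) :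
    ∀ z : ℂ, 0 ≤ z.im → (∀ n, z ≠ starRingEnd ℂ (lam n)) →
      a z = ∏ n : Fin N, (z - lam n) / (z - starRingEnd ℂ (lam n)) := by
  set l := Filter.comap (fun z : ℂ => ‖z‖) Filter.atTop ⊓ Filter.principal {z : ℂ | 0 ≤ z.im} with hl
  have hUopen : IsOpen {z : ℂ | 0 < z.im} := isOpen_lt continuous_const Complex.continuous_im
  set P : ℂ → ℂ := fun z => ∏ n : Fin N, (z - lam n) with hP
  set Q : ℂ → ℂ := fun z => ∏ n : Fin N, (z - starRingEnd ℂ (lam n)) with hQ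
  have hPd : Differentiable ℂ P :=
    Differentiable.fun_finsetProd fun n _ => differentiable_id.sub_const _
  have hQd : Differentiable ℂ Q :=
    Differentiable.fun_finsetProd fun n _ => differentiable_id.sub_const _
  -- Q never vanishes on the closed upper half plane
  have hQne : ∀ z : ℂ, 0 ≤ z.im → Q z ≠ 0 := by
    intro z hz
    refine Finset.prod_ne_zero_iff.mpr fun n _ => sub_ne_zero.mpr fun h => ?_
    have : z.im = -(lam n).im := by rw [h]; simp
    linarith [him n]
  -- P doesn't vanish off the lam's
  have hPne : ∀ z : ℂ, (∀ n, z ≠ lam n) → P z ≠ 0 := fun z hz =>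
    Finset.prod_ne_zero_iff.mpr fun n _ => sub_ne_zero.mpr (hz n)
  -- factor a = g * P
  obtain ⟨g, hgd, hgc, hfg⟩ := peel17 lam hinj him Finset.univ a hdiff hcont
    (fun n _ => (hzeros (lam n) (him n)).mpr ⟨n, rfl⟩)
  set h : ℂ → ℂ := fun z => g z * Q z with hh
  have hhd : DifferentiableOn ℂ h {z : ℂ | 0 < z.im} := hgd.mul hQd.differentiableOn
  have hhc : ContinuousOn h {z : ℂ | 0 ≤ z.im} := hgc.mul hQd.continuous.continuousOn
  -- h on points where P ≠ 0
  have hform : ∀ z : ℂ, P z ≠ 0 → h z * P z = a z * Q z := by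
    intro z hPz
    rw [hh, hfg z]
    ring
  -- modulus one on the real axis
  have hmodh : ∀ x : ℝ, ‖h (x : ℂ)‖ = 1 := by
    intro x
    have hPx : P (x : ℂ) ≠ 0 := hPne _ fun n hx => by
      have := him n; rw [← hx] at this; simp at this
    have hPQ : ‖Q (x : ℂ)‖ = ‖P (x : ℂ)‖ := by
      rw [hP, hQ, norm_prod, norm_prod]
      refine Finset.prod_congr rfl fun n _ => ?_
      rw [show (x : ℂ) - starRingEnd ℂ (lam n) = starRingEnd ℂ ((x : ℂ) - lam n) by
        rw [map_sub, Complex.conj_ofReal]]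
      exact Complex.norm_conj _
    have hthis := hform (x : ℂ) hPx
    have habs : ‖h (x:ℂ)‖ * ‖P (x:ℂ)‖
        = ‖a (x:ℂ)‖ * ‖Q (x:ℂ)‖ := by
      rw [← norm_mul, ← norm_mul, hthis]
    rw [hmod x, one_mul, hPQ] at habs
    have hPabs : ‖P (x : ℂ)‖ ≠ 0 := by simpa using hPx
    exact mul_right_cancel₀ hPabs (by rw [habs, one_mul])
  -- the limit of h at infinity is 1
  have hlimratio : Tendsto (fun z : ℂ => ∏ n : Fin N, (z - starRingEnd ℂ (lam n)) / (z - lam n))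
      (Filter.comap (fun z : ℂ => ‖z‖) Filter.atTop) (nhds 1) := by
    have := tendsto_finset_prod (f := fun (n : Fin N) (z : ℂ) =>
      (z - starRingEnd ℂ (lam n)) / (z - lam n)) (a := fun _ => (1 : ℂ)) Finset.univ
      (fun n _ => ratio_tendsto17 (lam n))
    simpa using this
  have hlimh : Tendsto h l (nhds 1) := by
    have hbig : ∀ᶠ z : ℂ in l, ∀ n, ‖lam n‖ < ‖z‖ := by
      refine Filter.Eventually.filter_mono inf_le_left ?_
      rw [Filter.eventually_all]
      exact fun n => (tendsto_comap (f := fun z : ℂ => ‖z‖)).eventually_gt_atTop _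
    have heq : ∀ᶠ z : ℂ in l,
        a z * ∏ n : Fin N, (z - starRingEnd ℂ (lam n)) / (z - lam n) = h z := by
      filter_upwards [hbig] with z hz
      have hPz : P z ≠ 0 := hPne z fun n h => by
        rw [h] at hz; exact lt_irrefl _ (hz n)
      have h2 : h z * P z = a z * Q z := hform z hPz
      rw [Finset.prod_div_distrib]
      show a z * (Q z / P z) = h z
      rw [← mul_div_assoc, ← h2, mul_div_cancel_right₀ _ hPz]
    have := (hlim.mul (hlimratio.mono_left inf_le_left)).congr' heq
    simpa using this
  -- g doesn't vanish on the open upper half-plane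
  have hgne : ∀ z : ℂ, 0 < z.im → g z ≠ 0 := by
    intro z hz
    by_cases hzl : ∃ n, z = lam n
    · obtain ⟨n, rfl⟩ := hzl
      set c := lam n
      set P₁ : ℂ → ℂ := fun z => ∏ m ∈ Finset.univ.erase n, (z - lam m) with hP₁
      have hP₁d : Differentiable ℂ P₁ :=
        Differentiable.fun_finsetProd fun m _ => differentiable_id.sub_const _
      have hPfac : ∀ w : ℂ, P w = (w - c) * P₁ w := fun w =>
        (Finset.mul_prod_erase Finset.univ (fun m => w - lam m) (Finset.mem_univ n)).symm
      have hgda : DifferentiableAt ℂ g c :=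
        (hgd c hz).differentiableAt (hUopen.mem_nhds hz)
      have hda : deriv a c = deriv (fun w => g w * P w) c := by
        apply Filter.EventuallyEq.deriv_eq
        exact Filter.Eventually.of_forall hfg
      have hPda : DifferentiableAt ℂ P c := hPd.differentiableAt
      have hderivP : deriv P c = P₁ c := by
        have heqP : P = fun w => (w - c) * P₁ w := funext hPfac
        have hhas : HasDerivAt (fun w => (w - c) * P₁ w)
            (1 * P₁ c + (c - c) * deriv P₁ c) c :=
          ((hasDerivAt_id c).sub_const c).mul hP₁d.differentiableAt.hasDerivAt
        rw [heqP, hhas.deriv]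
        simp
      have hP0 : P c = 0 := by rw [hPfac]; simp
      have hs := hsimple n
      rw [hda, deriv_fun_mul hgda hPda, hP0, mul_zero, zero_add, hderivP] at hs
      intro hg0
      rw [hg0] at hs
      simp at hs
    · push_neg at hzl
      have : a z ≠ 0 := fun h0 => hzl ((hzeros z hz).mp h0).choose (by
        exact ((hzeros z hz).mp h0).choose_spec)
      rw [hfg z] at this
      exact fun hg0 => this (by rw [hg0, zero_mul])
  -- h doesn't vanish on the closed upper half-plane
  have hhne : ∀ z : ℂ, 0 ≤ z.im → h z ≠ 0 := by
    intro z hz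
    rcases lt_or_eq_of_le hz with hlt | heq
    · exact mul_ne_zero (hgne z hlt) (hQne z hz)
    · have hz0 : z = ((z.re : ℝ) : ℂ) := by
        apply Complex.ext <;> simp [← heq]
      rw [hz0]
      intro h0
      have := hmodh z.re
      rw [h0] at this
      simp at this
  -- Phragmen-Lindelof for h and h⁻¹
  have hble : ∀ z : ℂ, 0 ≤ z.im → ‖h z‖ ≤ 1 := by
    refine pl17 h hhd hhc (bound17 h hhc hlimh) fun x => le_of_eq (hmodh x)
  have hinvle : ∀ z : ℂ, 0 ≤ z.im → ‖(h z)⁻¹‖ ≤ 1 := by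
    refine pl17 _ (hhd.inv fun z hz => hhne z (le_of_lt hz)) (hhc.inv₀ fun z hz => hhne z hz)
      (bound17 _ (hhc.inv₀ fun z hz => hhne z hz) ?_) fun x => ?_
    · have := hlimh.inv₀ one_ne_zero; rw [inv_one] at this; exact this
    · rw [norm_inv, hmodh x]; norm_num
  have hnorm1 : ∀ z : ℂ, 0 ≤ z.im → ‖h z‖ = 1 := by
    intro z hz
    have h1 := hble z hz
    have h2 := hinvle z hz
    rw [norm_inv] at h2
    have hne := hhne z hz
    have : 1 ≤ ‖h z‖ := by
      rw [inv_le_one_iff₀] at h2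
      rcases h2 with h2 | h2
      · exact absurd (norm_pos_iff.mpr hne) (not_lt.mpr h2)
      · exact h2
    linarith
  -- maximum modulus: h is constant on the upper half-plane
  have hconst : EqOn h (Function.const ℂ (h I)) {z : ℂ | 0 ≤ z.im} := by
    have hpre : IsPreconnected {z : ℂ | 0 < z.im} := (convex_halfSpace_im_gt 0).isPreconnected
    have hImem : I ∈ {z : ℂ | 0 < z.im} := by simp
    have hmax : IsMaxOn (norm ∘ h) {z : ℂ | 0 < z.im} I := by
      intro z hz
      simp only [Function.comp_apply, mem_setOf_eq]
      rw [hnorm1 z (le_of_lt hz), hnorm1 I (by simp)]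
    have := Complex.eqOn_of_isPreconnected_of_isMaxOn_norm hpre hUopen hhd hImem hmax
    refine this.of_subset_closure hhc continuousOn_const ?_ ?_
    · intro z hz
      simp only [mem_setOf_eq] at *
      exact le_of_lt hz
    · rw [closure_setOf_lt_im]
  -- the constant is 1
  have hI1 : h I = 1 := by
    have hseq : Tendsto (fun t : ℝ => (t : ℂ) * I) atTop l := by
      rw [hl, tendsto_inf]
      constructor
      · rw [tendsto_comap_iff]
        have : ((fun z : ℂ => ‖z‖) ∘ fun t : ℝ => (t : ℂ) * I) = fun t : ℝ => |t| := by
          funext t; simp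
        rw [this]
        exact tendsto_abs_atTop_atTop
      · rw [tendsto_principal]
        filter_upwards [eventually_ge_atTop (0 : ℝ)] with t ht
        simpa using ht
    have h1 : Tendsto (fun t : ℝ => h ((t : ℂ) * I)) atTop (nhds 1) := hlimh.comp hseq
    have h2 : (fun t : ℝ => h ((t : ℂ) * I)) =ᶠ[atTop] fun _ => h I := by
      filter_upwards [eventually_ge_atTop (0 : ℝ)] with t ht
      exact hconst (by simpa using ht)
    have h3 : Tendsto (fun _ : ℝ => h I) atTop (nhds 1) := Tendsto.congr' h2 h1
    exact tendsto_nhds_unique tendsto_const_nhds h3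
  -- conclude
  intro z hz hzc
  have hQz : Q z ≠ 0 := hQne z hz
  have hhz : h z = 1 := by rw [hconst hz, Function.const_apply, hI1]
  have hgz : g z = (Q z)⁻¹ := eq_inv_of_mul_eq_one_left (show g z * Q z = 1 from hhz)
  rw [hfg z, hgz, Finset.prod_div_distrib]
  show (Q z)⁻¹ * P z = P z / Q z
  exact inv_mul_eq_div _ _
end
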